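/- Let c > 0 be a real number, let M be the 4×4 matrix [[4,−2,0,0],[−2,4,−2,0],[0,−2,2,−1],[0,0,−1,2]], let Ω = (c/4)·M, and let (d₁,…,d₄) = (2,3,4,2). Then max_{1≤j≤4} (1/d_j) ((Ω^{-1})_{jj})^{1/2} = √2 · c^{-1/2}. -/

import Mathlib

set_option maxHeartbeats 2000000 in
/-- (2.18): computation of `d(f₄) = max_j (1/d_j)√((Ω⁻¹)_{jj}) = √2·c^{-1/2}`,
where `Ω = (c/4)·M` is the Gram matrix of the simple roots of `f₄` and
`(d₁,…,d₄) = (2,3,4,2)` are the coefficients of the highest root. -/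
theorem stmt13 (c : ℝ) (hc : 0 < c)
    (M : Matrix (Fin 4) (Fin 4) ℝ)
    (hM : M = !![4,-2,0,0;
                 -2,4,-2,0;
                 0,-2,2,-1;
                 0,0,-1,2])
    (Ω : Matrix (Fin 4) (Fin 4) ℝ) (hΩ : Ω = (c / 4) • M)
    (d : Fin 4 → ℝ) (hd : d = ![2,3,4,2]) :
    Finset.univ.sup' Finset.univ_nonempty
        (fun j => (1 / d j) * Real.sqrt (Ω⁻¹ j j)) =
      Real.sqrt 2 * (Real.sqrt c)⁻¹ := by
  have hc' : c ≠ 0 := ne_of_gt hc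
  have hinv : Ω⁻¹ = (4 / c) • !![(1:ℝ),3/2,2,1; 3/2,3,4,2; 2,4,6,3; 1,2,3,2] := by
    apply Matrix.inv_eq_right_inv
    subst hΩ hM
    ext i j
    fin_cases i <;> fin_cases j <;>
      simp only [Matrix.mul_apply, Fin.sum_univ_four, Matrix.smul_apply, smul_eq_mul,
        Matrix.cons_val', Matrix.cons_val_zero, Matrix.cons_val_one, Matrix.head_cons,
        Matrix.empty_val', Matrix.cons_val_fin_one, Matrix.head_fin_const,
        Matrix.cons_val_two, Matrix.cons_val_three, Matrix.tail_cons,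
        Matrix.one_apply_eq, Matrix.one_apply_ne, Fin.isValue, ne_eq, Matrix.cons_val, Matrix.of_apply] <;>
      norm_num <;> field_simp <;> ring
  have hdiag : ∀ j : Fin 4, Ω⁻¹ j j = 4 / c * (![1, 3, 6, 2] j) := by
    intro j
    rw [hinv]
    fin_cases j <;> norm_num
  have hcpos := Real.sqrt_pos.mpr hc
  have key : ∀ k : ℝ, 0 ≤ k → Real.sqrt (4 / c * k) = 2 * Real.sqrt k / Real.sqrt c := by
    intro k hk
    rw [div_mul_eq_mul_div, Real.sqrt_div (by positivity) c, Real.sqrt_mul (by norm_num) k,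
      show (4:ℝ) = 2^2 by norm_num, Real.sqrt_sq (by norm_num)]
  have h2 : Real.sqrt 2 ^ 2 = 2 := Real.sq_sqrt (by norm_num)
  have h3 : Real.sqrt 3 ^ 2 = 3 := Real.sq_sqrt (by norm_num)
  have h6 : Real.sqrt 6 ^ 2 = 6 := Real.sq_sqrt (by norm_num)
  have s2 := Real.sqrt_nonneg 2
  have s3 := Real.sqrt_nonneg 3
  have s6 := Real.sqrt_nonneg 6
  have hval : ∀ j : Fin 4,
      (1 / d j) * Real.sqrt (Ω⁻¹ j j) =
        (![Real.sqrt 1, 2/3 * Real.sqrt 3, 1/2 * Real.sqrt 6, Real.sqrt 2] j) / Real.sqrt c := by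
    intro j
    rw [hdiag, hd]
    fin_cases j <;>
      · rw [key _ (by norm_num)]
        norm_num
        ring
  apply le_antisymm
  · apply Finset.sup'_le
    intro j _
    rw [hval j, ← div_eq_mul_inv, div_le_div_iff_of_pos_right hcpos]
    fin_cases j
    · show Real.sqrt 1 ≤ Real.sqrt 2
      exact Real.sqrt_le_sqrt (by norm_num)
    · show 2 / 3 * Real.sqrt 3 ≤ Real.sqrt 2
      nlinarith
    · show 1 / 2 * Real.sqrt 6 ≤ Real.sqrt 2
      nlinarith
    · show Real.sqrt 2 ≤ Real.sqrt 2
      exact le_refl _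
  · have h := Finset.le_sup' (fun j => (1 / d j) * Real.sqrt (Ω⁻¹ j j))
      (Finset.mem_univ (3 : Fin 4))
    refine le_trans (le_of_eq ?_) h
    rw [hval 3]
    norm_num
    rw [div_eq_mul_inv]
    rfl
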